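/- Let A ∈ ℝ^{n×m} with largest singular value σ > 0, and let the OGDA step size satisfy η < 1/(2σ). Consider the time-independent OGDA iterative matrix M = M_OGDA(A, A). Then: (i) if n = m and A is invertible, every (complex) eigenvalue of M has modulus strictly less than 1; (ii) if A has a zero singular value (in particular whenever A is not an invertible square matrix), then 1 is an eigenvalue of M and every eigenvalue of M other than 1 has modulus strictly less than 1. -/

import Mathlib

open Matrix Filter

/-- Spectral (operator 2-)norm of a real matrix; this is also its largest singular value. -/
noncomputable def mnorm2 {ι κ : Type*} [Fintype ι] [Fintype κ] [DecidableEq κ]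
    (M : Matrix ι κ ℝ) : ℝ :=
  ‖LinearMap.toContinuousLinearMap (Matrix.toEuclideanLin M)‖

/-- The OGDA iterative matrix
`M_OGDA(A, A') = [[I, −2ηA, 0, ηA'], [2ηAᵀ, I, −ηA'ᵀ, 0], [I, 0, 0, 0], [0, I, 0, 0]]`. -/
noncomputable def MOGDA {n m : ℕ} (η : ℝ) (A A' : Matrix (Fin n) (Fin m) ℝ) :
    Matrix ((Fin n ⊕ Fin m) ⊕ (Fin n ⊕ Fin m)) ((Fin n ⊕ Fin m) ⊕ (Fin n ⊕ Fin m)) ℝ :=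
  fromBlocks
    (fromBlocks 1 ((-(2 * η)) • A) ((2 * η) • Aᵀ) 1)
    (fromBlocks 0 (η • A') ((-η) • A'ᵀ) 0)
    1 0

/-- `μ : ℂ` is an eigenvalue of the real matrix `M`. -/
def IsEig {d : Type*} [Fintype d] (M : Matrix d d ℝ) (μ : ℂ) : Prop :=
  ∃ v : d → ℂ, v ≠ 0 ∧ (M.map (fun x : ℝ => (x : ℂ))).mulVec v = μ • v

lemma L1 {n m : ℕ} (A : Matrix (Fin n) (Fin m) ℝ) (z : Fin m → ℝ) :
    ∑ i, (A.mulVec z i)^2 ≤ (mnorm2 A)^2 * ∑ j, (z j)^2 := by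
  have h := (LinearMap.toContinuousLinearMap (Matrix.toEuclideanLin A)).le_opNorm
      ((WithLp.equiv 2 (Fin m → ℝ)).symm z)
  simp only [LinearMap.coe_toContinuousLinearMap', WithLp.equiv_symm_apply, toEuclideanLin_apply_piLp_toLp] at h
  have hn : ∀ {k : ℕ} (w : Fin k → ℝ), ‖(WithLp.equiv 2 (Fin k → ℝ)).symm w‖^2 = ∑ i, (w i)^2 := by
    intro k w
    rw [EuclideanSpace.norm_eq]
    rw [Real.sq_sqrt (by positivity)]
    simp [sq_abs]
  have h2 : ‖(WithLp.equiv 2 (Fin n → ℝ)).symm (A.mulVec z)‖^2 ≤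
      (mnorm2 A * ‖(WithLp.equiv 2 (Fin m → ℝ)).symm z‖)^2 := by
    apply pow_le_pow_left₀ (norm_nonneg _) h
  rw [hn, mul_pow, hn] at h2
  exact h2

noncomputable def cS {k : Type*} [Fintype k] (z : k → ℂ) : ℝ := ∑ i, Complex.normSq (z i)

lemma cS_nonneg {k : Type*} [Fintype k] (z : k → ℂ) : 0 ≤ cS z :=
  Finset.sum_nonneg fun _ _ => Complex.normSq_nonneg _

lemma cS_pos {k : Type*} [Fintype k] {z : k → ℂ} (hz : z ≠ 0) : 0 < cS z := by
  rcases Function.ne_iff.mp hz with ⟨i, hi⟩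
  have : 0 < Complex.normSq (z i) := by
    simpa [Complex.normSq_pos] using hi
  exact lt_of_lt_of_le this (Finset.single_le_sum (f := fun i => Complex.normSq (z i))
    (fun _ _ => Complex.normSq_nonneg _) (Finset.mem_univ i))

lemma star_dot_self {k : Type*} [Fintype k] (z : k → ℂ) : star z ⬝ᵥ z = (cS z : ℂ) := by
  simp [dotProduct, cS, Complex.normSq_eq_conj_mul_self]

lemma map_star_mulVec {k l : Type*} [Fintype k] [Fintype l] (B : Matrix k l ℝ) (y : l → ℂ) :
    (B.map (fun x : ℝ => (x:ℂ))).mulVec (star y) = star ((B.map (fun x : ℝ => (x:ℂ))).mulVec y) := by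
  funext i
  simp [mulVec, dotProduct, map_sum]

lemma star_dot_BtB {k l : Type*} [Fintype k] [Fintype l] (B : Matrix k l ℝ) (y : l → ℂ) :
    star y ⬝ᵥ (((Bᵀ * B).map (fun x : ℝ => (x:ℂ))).mulVec y)
      = (cS ((B.map (fun x : ℝ => (x:ℂ))).mulVec y) : ℂ) := by
  set Bc := B.map (fun x : ℝ => (x:ℂ)) with hBc
  have hmap : (Bᵀ * B).map (fun x : ℝ => (x:ℂ)) = Bcᵀ * Bc := by
    ext i j
    simp [hBc, Matrix.mul_apply, Matrix.map_apply, Matrix.transpose_apply]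
  rw [hmap, ← Matrix.mulVec_mulVec, Matrix.dotProduct_mulVec, Matrix.vecMul_transpose,
    map_star_mulVec]
  exact star_dot_self _

lemma cS_mulVec_le {n m : ℕ} (A : Matrix (Fin n) (Fin m) ℝ) (y : Fin m → ℂ) :
    cS ((A.map (fun x : ℝ => (x:ℂ))).mulVec y) ≤ (mnorm2 A)^2 * cS y := by
  set a : Fin m → ℝ := fun j => (y j).re with ha
  set b : Fin m → ℝ := fun j => (y j).im with hb
  have hre : ∀ i, ((A.map (fun x : ℝ => (x:ℂ))).mulVec y i).re = A.mulVec a i := by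
    intro i
    simp [mulVec, dotProduct, Complex.re_sum, a]
  have him : ∀ i, ((A.map (fun x : ℝ => (x:ℂ))).mulVec y i).im = A.mulVec b i := by
    intro i
    simp [mulVec, dotProduct, Complex.im_sum, b]
  have h1 : cS ((A.map (fun x : ℝ => (x:ℂ))).mulVec y)
      = (∑ i, (A.mulVec a i)^2) + (∑ i, (A.mulVec b i)^2) := by
    rw [cS, ← Finset.sum_add_distrib]
    congr 1; funext i
    rw [Complex.normSq_apply, hre, him]; ring
  have h2 : cS y = (∑ j, (a j)^2) + (∑ j, (b j)^2) := by
    rw [cS, ← Finset.sum_add_distrib]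
    congr 1; funext j
    rw [Complex.normSq_apply]; ring
  rw [h1, h2, mul_add]
  exact add_le_add (L1 A a) (L1 A b)

lemma L2 {n m : ℕ} (A : Matrix (Fin n) (Fin m) ℝ) (t : ℂ) (y : Fin m → ℂ) (hy : y ≠ 0)
    (h : ((Aᵀ * A).map (fun x : ℝ => (x:ℂ))).mulVec y = t • y) :
    ∃ s : ℝ, t = (s : ℂ) ∧ 0 ≤ s ∧ s ≤ (mnorm2 A)^2 := by
  have key : t * (cS y : ℂ) = (cS ((A.map (fun x : ℝ => (x:ℂ))).mulVec y) : ℂ) := by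
    rw [← star_dot_BtB, h]
    simp [dotProduct, Finset.mul_sum, star_dot_self]
    rw [← star_dot_self]
    simp [dotProduct, Finset.mul_sum, Pi.smul_apply, smul_eq_mul]
    exact Finset.sum_congr rfl fun x _ => by ring
  have hpos : (0:ℝ) < cS y := cS_pos hy
  refine ⟨cS ((A.map (fun x : ℝ => (x:ℂ))).mulVec y) / cS y, ?_, div_nonneg (cS_nonneg _) hpos.le, ?_⟩
  · have hne : (cS y : ℂ) ≠ 0 := by exact_mod_cast hpos.ne'
    push_cast
    rw [eq_div_iff hne, key]
  · rw [div_le_iff₀ hpos]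
    exact cS_mulVec_le A y

lemma quadQ (c : ℝ) (hc : c^2 < 1/4) (μ : ℂ) (hμ : μ ≠ 1)
    (h : μ^2 + (2*((c:ℂ)*Complex.I) - 1)*μ - (c:ℂ)*Complex.I = 0) : ‖μ‖ < 1 := by
  set r : ℝ := Real.sqrt (1 - 4*c^2) with hrdef
  have h4 : (0:ℝ) ≤ 1 - 4*c^2 := by nlinarith
  have hr2 : r^2 = 1 - 4*c^2 := Real.sq_sqrt h4
  have hr0 : 0 ≤ r := Real.sqrt_nonneg _
  have hr1 : r ≤ 1 := by nlinarith [sq_nonneg c]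
  have hr2c : (r:ℂ)^2 = 1 - 4*(c:ℂ)^2 := by exact_mod_cast congrArg (fun x : ℝ => (x:ℂ)) hr2
  have hfact : (μ - (1/2 - (c:ℂ)*Complex.I) - (r:ℂ)/2) *
      (μ - (1/2 - (c:ℂ)*Complex.I) + (r:ℂ)/2) = 0 := by
    have hI : Complex.I^2 = -1 := Complex.I_sq
    linear_combination h - (1/4)*hr2c + (c:ℂ)^2 * hI
  have habs : ∀ e : ℝ, μ = (e:ℂ) - (c:ℂ)*Complex.I → Complex.normSq μ = e^2 + c^2 := by
    intro e he
    rw [he, Complex.normSq_apply]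
    simp
    ring
  rcases mul_eq_zero.mp hfact with h1 | h1
  · -- μ = 1/2 - cI + r/2
    have he : μ = (((1+r)/2 : ℝ) : ℂ) - (c:ℂ)*Complex.I := by
      push_cast
      linear_combination h1
    have hrlt : r < 1 := by
      rcases lt_or_eq_of_le hr1 with h' | h'
      · exact h'
      · exfalso
        have hc0 : c = 0 := by nlinarith
        apply hμ
        rw [he, hc0, h']
        norm_num
    have hn := habs _ he
    have : Complex.normSq μ < 1 := by rw [hn]; nlinarith
    have hsq : (‖μ‖)^2 = Complex.normSq μ := Complex.sq_norm μ
    nlinarith [norm_nonneg μ]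
  · have he : μ = (((1-r)/2 : ℝ) : ℂ) - (c:ℂ)*Complex.I := by
      push_cast
      linear_combination h1
    have hn := habs _ he
    have : Complex.normSq μ < 1 := by rw [hn]; nlinarith
    have hsq : (‖μ‖)^2 = Complex.normSq μ := Complex.sq_norm μ
    nlinarith [norm_nonneg μ]

noncomputable def Jc {n m : ℕ} (A : Matrix (Fin n) (Fin m) ℝ) :
    Matrix (Fin n ⊕ Fin m) (Fin n ⊕ Fin m) ℂ :=
  fromBlocks 0 (A.map (fun x : ℝ => (x:ℂ))) (-(Aᵀ.map (fun x : ℝ => (x:ℂ)))) 0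

lemma mapc_smul {k l : Type*} (r : ℝ) (B : Matrix k l ℝ) :
    ((r • B).map (fun x : ℝ => (x:ℂ))) = (r:ℂ) • (B.map (fun x : ℝ => (x:ℂ))) := by
  ext i j
  simp

lemma mapc_one {k : Type*} [DecidableEq k] :
    ((1 : Matrix k k ℝ).map (fun x : ℝ => (x:ℂ))) = 1 := by
  ext i j
  by_cases h : i = j <;> simp [Matrix.one_apply, h]

lemma mapc_zero {k l : Type*} :
    ((0 : Matrix k l ℝ).map (fun x : ℝ => (x:ℂ))) = 0 := by
  ext i j; simp

lemma reduce {n m : ℕ} (η : ℝ) (A : Matrix (Fin n) (Fin m) ℝ) (μ : ℂ)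
    (h : IsEig (MOGDA η A A) μ) :
    ∃ w : Fin n ⊕ Fin m → ℂ, w ≠ 0 ∧
      ((η:ℂ)*(1-2*μ)) • (Jc A).mulVec w = (μ^2-μ) • w := by
  obtain ⟨v, hv0, hv⟩ := h
  set Ac := A.map (fun x : ℝ => (x:ℂ)) with hAc
  have hM : (MOGDA η A A).map (fun x : ℝ => (x:ℂ)) =
      fromBlocks (1 - ((2*η : ℝ):ℂ) • Jc A) ((η:ℂ) • Jc A) 1 0 := by
    ext i j
    rcases i with (i|i) | (i|i) <;> rcases j with (j|j) | (j|j) <;>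
      simp [MOGDA, Jc, Matrix.one_apply, Matrix.sub_apply, Matrix.smul_apply,
        Matrix.fromBlocks_apply₁₁, Matrix.fromBlocks_apply₁₂, Matrix.fromBlocks_apply₂₁,
        Matrix.fromBlocks_apply₂₂, Matrix.map_apply] <;>
      push_cast <;> split_ifs <;> simp <;> ring
  rw [hM, fromBlocks_mulVec] at hv
  set w₁ : Fin n ⊕ Fin m → ℂ := v ∘ Sum.inl with hw₁
  set w₂ : Fin n ⊕ Fin m → ℂ := v ∘ Sum.inr with hw₂
  have h2 : w₁ = μ • w₂ := by
    funext z
    have := congrFun hv (Sum.inr z)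
    simpa [Matrix.one_mulVec, Matrix.zero_mulVec, w₂] using this
  have h1 : (1 - ((2*η : ℝ):ℂ) • Jc A).mulVec w₁ + ((η:ℂ) • Jc A).mulVec w₂ = μ • w₁ := by
    funext z
    have := congrFun hv (Sum.inl z)
    simpa [w₁] using this
  refine ⟨w₂, ?_, ?_⟩
  · intro hz
    apply hv0
    funext i
    rcases i with i | i
    · have : w₁ i = μ • w₂ i := congrFun h2 i
      simpa [hz, w₁] using this
    · exact congrFun hz i
  · rw [h2] at h1
    rw [Matrix.sub_mulVec, Matrix.one_mulVec, Matrix.smul_mulVec,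
      Matrix.smul_mulVec, Matrix.mulVec_smul] at h1
    funext z
    have h1z := congrFun h1 z
    simp only [Pi.add_apply, Pi.sub_apply, Pi.smul_apply, smul_eq_mul] at h1z ⊢
    push_cast at h1z ⊢
    linear_combination h1z

lemma tailLem (eta sig s : ℝ) (heta : 0 < eta) (hsig : 0 < sig) (hetas : eta < 1/(2*sig))
    (hs0 : 0 ≤ s) (hsle : s ≤ sig^2) (mu : ℂ) (hmu : mu ≠ 1) (d : ℂ)
    (hdlam : mu^2 - mu = d * (1 - 2*mu)) (hd2 : d^2 = -((eta^2*s : ℝ):ℂ)) :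
    ‖mu‖ < 1 := by
  have hre : (d^2).re = -(eta^2*s) := by
    simp only [hd2, Complex.neg_re, Complex.ofReal_re]
  have hdre : d.re = 0 := by
    have him : (d^2).im = 0 := by
      simp only [hd2, Complex.neg_im, Complex.ofReal_im, neg_zero]
    simp [pow_two, Complex.mul_im] at him
    simp [pow_two, Complex.mul_re] at hre
    have hprod : d.re * d.im = 0 := by linarith
    rcases mul_eq_zero.mp hprod with h | h
    · exact h
    · nlinarith [sq_nonneg d.re, sq_nonneg d.im]
  set c : ℝ := d.im with hc
  have hdeq : d = (c:ℂ) * Complex.I := by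
    rw [hc]
    exact (Complex.ext_iff.mpr ⟨by simp [hdre], by simp⟩)
  have hc2 : c^2 = eta^2 * s := by
    have hre2 := hre
    simp [pow_two, Complex.mul_re, hdre] at hre2
    nlinarith
  have hclt : c^2 < 1/4 := by
    have h1 : eta * sig < 1/2 := by
      rw [lt_div_iff₀ (by positivity)] at hetas
      nlinarith
    have h2 : eta^2 * s ≤ (eta*sig)^2 := by
      have h4 := mul_le_mul_of_nonneg_left hsle (sq_nonneg eta)
      nlinarith
    have h3 : (eta*sig)^2 < 1/4 := by nlinarith [mul_pos heta hsig]
    rw [hc2]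
    linarith
  have hquad : mu^2 + (2*((c:ℂ)*Complex.I) - 1)*mu - (c:ℂ)*Complex.I = 0 := by
    rw [hdeq] at hdlam
    linear_combination hdlam
  exact quadQ c hclt mu hmu hquad

lemma key {n m : ℕ} (η : ℝ) (hη : 0 < η) (A : Matrix (Fin n) (Fin m) ℝ)
    (hσ : 0 < mnorm2 A) (hησ : η < 1/(2*mnorm2 A)) (μ : ℂ) (hμ : μ ≠ 1)
    (w : Fin n ⊕ Fin m → ℂ) (hw : w ≠ 0)
    (heq : ((η:ℂ)*(1-2*μ)) • (Jc A).mulVec w = (μ^2-μ) • w) :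
    ‖μ‖ < 1 := by
  set σ := mnorm2 A with hσdef
  set Ac := A.map (fun x : ℝ => (x:ℂ)) with hAc
  -- μ ≠ 1/2
  have hμhalf : μ ≠ 1/2 := by
    intro h12
    rw [h12] at heq
    norm_num at heq
    exact hw heq
  have hden : ((η:ℂ)*(1-2*μ)) ≠ 0 := by
    apply mul_ne_zero
    · exact_mod_cast hη.ne'
    · intro h0
      apply hμhalf
      have : (2:ℂ) * μ = 1 := by linear_combination -h0
      field_simp
      linear_combination this
  set lam : ℂ := (μ^2-μ) / ((η:ℂ)*(1-2*μ)) with hlam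
  have hJw : (Jc A).mulVec w = lam • w := by
    have h2 : ((η:ℂ)*(1-2*μ)) • (Jc A).mulVec w = ((η:ℂ)*(1-2*μ)) • (lam • w) := by
      rw [heq, smul_smul, hlam]
      congr 1
      field_simp
      rw [eq_div_iff (by rw [mul_comm μ 2]; exact hden)]; ring
    exact smul_right_injective _ hden h2
  have hlameq : μ^2 - μ = lam * ((η:ℂ)*(1-2*μ)) := by
    rw [hlam]; field_simp
    rw [eq_div_iff (by rw [mul_comm μ 2]; exact hden)]; ring
  set x : Fin n → ℂ := w ∘ Sum.inl with hx
  set y : Fin m → ℂ := w ∘ Sum.inr with hy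
  rw [Jc, fromBlocks_mulVec] at hJw
  have hAy : Ac.mulVec y = lam • x := by
    funext i
    have := congrFun hJw (Sum.inl i)
    simpa [Matrix.zero_mulVec, ← hAc, x, y] using this
  have hAtx : (Aᵀ.map (fun x : ℝ => (x:ℂ))).mulVec x = (-lam) • y := by
    funext j
    have h3 := congrFun hJw (Sum.inr j)
    simp [Matrix.zero_mulVec, Matrix.neg_mulVec, Function.comp_apply] at h3
    simp only [Pi.smul_apply, smul_eq_mul, neg_smul, Pi.neg_apply, hx, hy, Function.comp_apply]
    linear_combination -h3
  -- get real s with lam^2 = -s, 0 ≤ s ≤ σ^2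
  have hs : ∃ s : ℝ, lam^2 = -(s:ℂ) ∧ 0 ≤ s ∧ s ≤ σ^2 := by
    by_cases hy0 : y = 0
    · have hx0 : x ≠ 0 := by
        intro hx0
        apply hw
        funext i
        rcases i with i | i
        · exact congrFun hx0 i
        · exact congrFun hy0 i
      have : lam • x = 0 := by rw [← hAy, hy0, Matrix.mulVec_zero]
      have hlam0 : lam = 0 := by
        rcases smul_eq_zero.mp this with h | h
        · exact h
        · exact absurd h hx0
      exact ⟨0, by simp [hlam0], le_refl 0, by positivity⟩
    · have hAtA : ((Aᵀ * A).map (fun x : ℝ => (x:ℂ))).mulVec y = (-(lam^2)) • y := by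
        have hmap : (Aᵀ * A).map (fun x : ℝ => (x:ℂ))
            = (Aᵀ.map (fun x : ℝ => (x:ℂ))) * Ac := by
          ext i j
          simp [Matrix.mul_apply, Matrix.map_apply, hAc]
        rw [hmap, ← Matrix.mulVec_mulVec, hAy, Matrix.mulVec_smul, hAtx, smul_smul]
        congr 1
        ring
      obtain ⟨s, hseq, hs0, hsle⟩ := L2 A _ y hy0 hAtA
      exact ⟨s, by linear_combination -hseq, hs0, hsle⟩
  obtain ⟨s, hlam2, hs0, hsle⟩ := hs
  clear hJw hAy hAtx heq
  clear_value lam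
  -- d := η * lam is purely imaginary
  set d : ℂ := (η:ℂ) * lam with hd
  have hdlam : μ^2 - μ = d * (1 - 2*μ) := by
    rw [hd, hlameq]; ring
  have hd2 : d^2 = -((η^2*s : ℝ):ℂ) := by
    rw [hd]
    push_cast
    rw [mul_pow, hlam2]
    ring
  exact tailLem η σ s hη hσ hησ hs0 hsle μ hμ d hdlam hd2

lemma mulVec_map_real {k l : Type*} [Fintype l] (B : Matrix k l ℝ) (y : l → ℝ) :
    (B.map (fun x : ℝ => (x:ℂ))).mulVec (fun j => ((y j : ℝ) : ℂ))
      = fun i => ((B.mulVec y i : ℝ) : ℂ) := by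
  funext i
  simp [mulVec, dotProduct]

lemma mogda_map {n m : ℕ} (η : ℝ) (A : Matrix (Fin n) (Fin m) ℝ) :
    (MOGDA η A A).map (fun x : ℝ => (x:ℂ)) =
      fromBlocks (1 - ((2*η : ℝ):ℂ) • Jc A) ((η:ℂ) • Jc A) 1 0 := by
  ext i j
  rcases i with (i|i) | (i|i) <;> rcases j with (j|j) | (j|j) <;>
    simp [MOGDA, Jc, Matrix.one_apply, Matrix.sub_apply, Matrix.smul_apply,
      Matrix.fromBlocks_apply₁₁, Matrix.fromBlocks_apply₁₂, Matrix.fromBlocks_apply₂₁,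
      Matrix.fromBlocks_apply₂₂, Matrix.map_apply] <;>
    push_cast <;> split_ifs <;> simp

lemma eig_one {n m : ℕ} (η : ℝ) (A : Matrix (Fin n) (Fin m) ℝ)
    (h : (∃ y : Fin m → ℝ, y ≠ 0 ∧ A.mulVec y = 0) ∨
      (∃ x : Fin n → ℝ, x ≠ 0 ∧ Aᵀ.mulVec x = 0)) :
    IsEig (MOGDA η A A) 1 := by
  have hcore : ∃ wv : Fin n ⊕ Fin m → ℂ, wv ≠ 0 ∧ (Jc A).mulVec wv = 0 := by
    rcases h with ⟨y, hy0, hAy⟩ | ⟨x, hx0, hAtx⟩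
    · refine ⟨Sum.elim 0 (fun j => ((y j : ℝ):ℂ)), ?_, ?_⟩
      · intro h0
        apply hy0
        funext j
        have := congrFun h0 (Sum.inr j)
        simpa using this
      · rw [Jc, fromBlocks_mulVec]
        funext i
        rcases i with i | i
        · have : (Sum.elim (0 : Fin n → ℂ) (fun j => ((y j : ℝ):ℂ))) ∘ Sum.inr
              = fun j => ((y j : ℝ):ℂ) := rfl
          simp only [Matrix.zero_mulVec, Sum.elim_inl, this, Pi.add_apply, Pi.zero_apply,
            zero_add]
          have h2 := congrFun (mulVec_map_real A y) i
          simp only [hAy] at h2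
          simpa using h2
        · simp [Matrix.zero_mulVec, Matrix.neg_mulVec]
    · refine ⟨Sum.elim (fun i => ((x i : ℝ):ℂ)) 0, ?_, ?_⟩
      · intro h0
        apply hx0
        funext i
        have := congrFun h0 (Sum.inl i)
        simpa using this
      · rw [Jc, fromBlocks_mulVec]
        funext i
        rcases i with i | i
        · have : (Sum.elim (fun i => ((x i : ℝ):ℂ)) (0 : Fin m → ℂ)) ∘ Sum.inr
              = (0 : Fin m → ℂ) := rfl
          simp [Matrix.zero_mulVec, this, Matrix.mulVec_zero]
        · have : (Sum.elim (fun i => ((x i : ℝ):ℂ)) (0 : Fin m → ℂ)) ∘ Sum.inl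
              = fun i => ((x i : ℝ):ℂ) := rfl
          simp only [Matrix.zero_mulVec, Matrix.neg_mulVec, Sum.elim_inr, this,
            Pi.add_apply, Pi.neg_apply, Pi.zero_apply, add_zero, zero_add]
          have h2 := congrFun (mulVec_map_real Aᵀ x) i
          simp only [hAtx] at h2
          simp at h2
          simp [h2]
  obtain ⟨wv, hwv0, hJwv⟩ := hcore
  refine ⟨Sum.elim wv wv, ?_, ?_⟩
  · intro h0
    apply hwv0
    funext i
    have := congrFun h0 (Sum.inl i)
    simpa using this
  · rw [mogda_map, fromBlocks_mulVec]
    have hl : (Sum.elim wv wv) ∘ Sum.inl = wv := rfl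
    have hr : (Sum.elim wv wv) ∘ Sum.inr = wv := rfl
    rw [hl, hr, Matrix.sub_mulVec, Matrix.one_mulVec, Matrix.smul_mulVec,
      Matrix.smul_mulVec, hJwv, Matrix.zero_mulVec]
    funext i
    rcases i with i | i <;> simp [Matrix.one_mulVec]

lemma mu_ne_one {n : ℕ} (η : ℝ) (hη : 0 < η) (A : Matrix (Fin n) (Fin n) ℝ)
    (hdet : IsUnit A.det) (μ : ℂ) (hμ1 : μ = 1)
    (w : Fin n ⊕ Fin n → ℂ) (hw : w ≠ 0)
    (heq : ((η:ℂ)*(1-2*μ)) • (Jc A).mulVec w = (μ^2-μ) • w) : False := by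
  subst hμ1
  set Ac := A.map (fun x : ℝ => (x:ℂ)) with hAc
  have hJ : (Jc A).mulVec w = 0 := by
    have hc : ((η:ℂ)*(1-2*(1:ℂ))) ≠ 0 := by
      have : (η:ℂ) ≠ 0 := by exact_mod_cast hη.ne'
      intro h0
      rcases mul_eq_zero.mp h0 with h | h
      · exact this h
      · norm_num at h
    have h0 : ((η:ℂ)*(1-2*(1:ℂ))) • (Jc A).mulVec w = 0 := by rw [heq]; norm_num
    exact (smul_eq_zero.mp h0).resolve_left hc
  rw [Jc, fromBlocks_mulVec] at hJ
  have hAy : Ac.mulVec (w ∘ Sum.inr) = 0 := by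
    funext i
    have := congrFun hJ (Sum.inl i)
    simpa [Matrix.zero_mulVec, hAc] using this
  have hAtx : (Aᵀ.map (fun x : ℝ => (x:ℂ))).mulVec (w ∘ Sum.inl) = 0 := by
    funext j
    have := congrFun hJ (Sum.inr j)
    simp [Matrix.zero_mulVec, Matrix.neg_mulVec] at this
    simpa using this
  have hdetc : IsUnit Ac.det := by
    have h1 : Ac.det = Complex.ofRealHom A.det := by
      rw [hAc]
      exact (RingHom.map_det Complex.ofRealHom A).symm
    rw [h1]
    exact hdet.map Complex.ofRealHom
  have hdetct : IsUnit (Aᵀ.map (fun x : ℝ => (x:ℂ))).det := by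
    have h1 : (Aᵀ.map (fun x : ℝ => (x:ℂ))) = Acᵀ := by
      rw [hAc]; exact Matrix.transpose_map
    rw [h1, Matrix.det_transpose]
    exact hdetc
  have hy : (w ∘ Sum.inr) = 0 := by
    have := congrArg (fun z => (Ac⁻¹).mulVec z) hAy
    simpa [Matrix.mulVec_mulVec, Matrix.nonsing_inv_mul _ hdetc, Matrix.one_mulVec,
      Matrix.mulVec_zero] using this
  have hx : (w ∘ Sum.inl) = 0 := by
    have := congrArg (fun z => ((Aᵀ.map (fun x : ℝ => (x:ℂ)))⁻¹).mulVec z) hAtx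
    simpa [Matrix.mulVec_mulVec, Matrix.nonsing_inv_mul _ hdetct, Matrix.one_mulVec,
      Matrix.mulVec_zero] using this
  apply hw
  funext i
  rcases i with i | i
  · exact congrFun hx i
  · exact congrFun hy i

/-- With OGDA step size `η < 1/(2σ)`, `σ = ‖A‖₂ > 0` the largest singular value, and
`M = M_OGDA(A, A)` the time-independent OGDA iterative matrix:
(i) if `A` is an invertible square matrix, every complex eigenvalue of `M` has modulus `< 1`;
(ii) if `A` has a zero singular value (i.e. `A` or `Aᵀ` has a nontrivial kernel, which is the
case whenever `A` is not an invertible square matrix), then `1` is an eigenvalue of `M` and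
all other eigenvalues have modulus `< 1`. -/
theorem stmt8 (η : ℝ) (hη : 0 < η) :
    (∀ (n : ℕ) (A : Matrix (Fin n) (Fin n) ℝ), 0 < mnorm2 A →
      η < 1 / (2 * mnorm2 A) → IsUnit A.det →
      ∀ μ : ℂ, IsEig (MOGDA η A A) μ → ‖μ‖ < 1) ∧
    (∀ (n m : ℕ) (A : Matrix (Fin n) (Fin m) ℝ), 0 < mnorm2 A →
      η < 1 / (2 * mnorm2 A) →
      ((∃ y : Fin m → ℝ, y ≠ 0 ∧ A.mulVec y = 0) ∨
        (∃ x : Fin n → ℝ, x ≠ 0 ∧ Aᵀ.mulVec x = 0)) →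
      IsEig (MOGDA η A A) 1 ∧
        ∀ μ : ℂ, IsEig (MOGDA η A A) μ → μ ≠ 1 → ‖μ‖ < 1) := by
  constructor
  · intro n A hσ hησ hdet μ hμeig
    obtain ⟨w, hw, heq⟩ := reduce η A μ hμeig
    have hμ1 : μ ≠ 1 := fun h => mu_ne_one η hη A hdet μ h w hw heq
    exact key η hη A hσ hησ μ hμ1 w hw heq
  · intro n m A hσ hησ hker
    refine ⟨eig_one η A hker, ?_⟩
    intro μ hμeig hμ1
    obtain ⟨w, hw, heq⟩ := reduce η A μ hμeig
    exact key η hη A hσ hησ μ hμ1 w hw heq
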